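/- arXiv:math/0210273 — 5 statements merged into one kernel-verified Lean document; each statement's English description precedes it below -/
import Mathlib

section
/- Let R be a commutative ring containing ℚ, let a ∈ R, and let n be a strictly positive integer. Then the polynomial (t^{2n+1} - a^{2n+1})/(t - a) = t^{2n} + a t^{2n-1} + ⋯ + a^{2n} in R[t] is the square of a polynomial in R[t] if and only if a^{n+1} = 0. -/
open Polynomial Finset Nat


section Helpers
variable {R : Type*} [CommRing R]

lemma nil_mul {x y : R} (h : IsNilpotent y) : IsNilpotent (x * y) := by
  obtain ⟨t, ht⟩ := h
  exact ⟨t, by rw [mul_pow, ht, mul_zero]⟩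

lemma nil_add {x y : R} (hx : IsNilpotent x) (hy : IsNilpotent y) : IsNilpotent (x + y) :=
  Commute.isNilpotent_add (Commute.all x y) hx hy

lemma nil_pow_ge_one {x : R} (h : IsNilpotent x) {e : ℕ} (he : 1 ≤ e) : IsNilpotent (x ^ e) := by
  obtain ⟨d, rfl⟩ : ∃ d, e = d + 1 := ⟨e - 1, by omega⟩
  obtain ⟨t, ht⟩ := h
  exact ⟨t, by rw [← pow_mul, show (d+1)*t = t + d*t by ring, pow_add, ht, zero_mul]⟩

lemma isUnit_natCast_qalg (R : Type*) [CommRing R] [Algebra ℚ R] (t : ℕ) (h : t ≠ 0) :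
    IsUnit ((t : ℕ) : R) := by
  have h1 : ((t : ℕ) : R) = algebraMap ℚ R ((t : ℕ) : ℚ) := by
    rw [map_natCast]
  rw [h1]
  exact (isUnit_iff_ne_zero.mpr (by exact_mod_cast h)).map (algebraMap ℚ R)

lemma coeff_sum_C_X_pow (m : ℕ) (c : ℕ → R) (k : ℕ) :
    (∑ i ∈ Finset.range (m+1), C (c i) * X ^ i).coeff k = if k ≤ m then c k else 0 := by
  rw [finset_sum_coeff]
  simp only [coeff_C_mul, coeff_X_pow, mul_ite, mul_one, mul_zero]
  rw [Finset.sum_ite_eq (Finset.range (m+1)) k]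
  simp [Nat.lt_succ_iff]

/-- In a local ring where 2 is a unit, an element whose square is 1 + nilpotent is
±1 + nilpotent. -/
lemma local_sign {S : Type*} [CommRing S] [IsLocalRing S] (h2 : IsUnit (2 : S)) (x : S)
    (hx : IsNilpotent (x ^ 2 - 1)) : ∃ σ : S, σ ^ 2 = 1 ∧ IsNilpotent (σ * x - 1) := by
  have hmem : x ^ 2 - 1 ∈ IsLocalRing.maximalIdeal S :=
    nilpotent_iff_mem_prime.mp hx _ (IsLocalRing.maximalIdeal.isMaximal S).isPrime
  have hfac : (x - 1) * (x + 1) = x ^ 2 - 1 := by ring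
  have hprime : (IsLocalRing.maximalIdeal S).IsPrime :=
    (IsLocalRing.maximalIdeal.isMaximal S).isPrime
  have h2n : (2 : S) ∉ IsLocalRing.maximalIdeal S := fun hc =>
    (IsLocalRing.maximalIdeal.isMaximal S).ne_top (Ideal.eq_top_of_isUnit_mem _ hc h2)
  have := hprime.mem_or_mem (by rw [hfac]; exact hmem)
  rcases this with h | h
  · -- x - 1 ∈ m, so x + 1 is a unit
    have hu : IsUnit (x + 1) := by
      by_contra hnu
      have : x + 1 ∈ IsLocalRing.maximalIdeal S := (IsLocalRing.mem_maximalIdeal _).mpr hnu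
      have : (2 : S) ∈ IsLocalRing.maximalIdeal S := by
        have h22 : (2 : S) = (x + 1) - (x - 1) := by ring
        rw [h22]
        exact Ideal.sub_mem _ this h
      exact h2n this
    obtain ⟨u, hu⟩ := hu
    refine ⟨1, by ring, ?_⟩
    have key : 1 * x - 1 = (x ^ 2 - 1) * ↑u⁻¹ := by
      have : (x ^ 2 - 1) = (x - 1) * ↑u := by rw [hu]; ring
      rw [this, mul_assoc, Units.mul_inv, mul_one, one_mul]
    rw [key]
    obtain ⟨t, ht⟩ := hx
    exact ⟨t, by rw [mul_pow, ht, zero_mul]⟩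
  · -- x + 1 ∈ m, so x - 1 is a unit
    have hu : IsUnit (x - 1) := by
      by_contra hnu
      have : x - 1 ∈ IsLocalRing.maximalIdeal S := (IsLocalRing.mem_maximalIdeal _).mpr hnu
      have : (2 : S) ∈ IsLocalRing.maximalIdeal S := by
        have h22 : (2 : S) = (x + 1) - (x - 1) := by ring
        rw [h22]
        exact Ideal.sub_mem _ h this
      exact h2n this
    obtain ⟨u, hu⟩ := hu
    refine ⟨-1, by ring, ?_⟩
    have key : (-1 : S) * x - 1 = -((x ^ 2 - 1) * ↑u⁻¹) := by
      have : (x ^ 2 - 1) = (x + 1) * ↑u := by rw [hu]; ring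
      rw [this, mul_assoc, Units.mul_inv, mul_one]
      ring
    rw [key]
    obtain ⟨t, ht⟩ := hx
    exact ⟨t, by rw [neg_pow, mul_pow, ht, zero_mul, mul_zero]⟩

/-- The kill lemma: if u * v = 0 and u = c X^N + nilpotent with c a unit, then v = 0. -/
lemma kill {S : Type*} [CommRing S] (u v : S[X]) (c : S) (N : ℕ) (hc : IsUnit c)
    (huv : u * v = 0) (hnu : IsNilpotent (u - C c * X ^ N)) : v = 0 := by
  set ν := u - C c * X ^ N with hν
  have hstep : ∀ k : ℕ, (C c * X ^ N) ^ k * v = (-ν) ^ k * v := by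
    intro k
    induction k with
    | zero => simp
    | succ k ih =>
      have hXv : (C c * X ^ N) * v = -ν * v := by
        have : C c * X ^ N = u - ν := by rw [hν]; ring
        rw [this, sub_mul, huv, zero_sub, neg_mul]
      calc (C c * X ^ N) ^ (k+1) * v = (C c * X ^ N) ^ k * ((C c * X ^ N) * v) := by ring
        _ = (C c * X ^ N) ^ k * (-ν * v) := by rw [hXv]
        _ = -ν * ((C c * X ^ N) ^ k * v) := by ring
        _ = -ν * ((-ν) ^ k * v) := by rw [ih]
        _ = (-ν) ^ (k+1) * v := by ring
  obtain ⟨t, ht⟩ := hnu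
  have h0 : (C c * X ^ N) ^ t * v = 0 := by
    rw [hstep t, neg_pow, ht, mul_zero, zero_mul]
  have hXt : C (c ^ t) * (X ^ (N * t) * v) = 0 := by
    rw [← h0]; rw [mul_pow, ← C_pow, ← pow_mul]; ring
  have hXv : X ^ (N * t) * v = 0 := by
    have hcu : IsUnit (C (c ^ t)) := Polynomial.isUnit_C.mpr (hc.pow t)
    exact (hcu.mul_right_eq_zero).mp hXt
  ext d
  have := congrArg (fun p => Polynomial.coeff p (d + N * t)) hXv
  simpa [mul_comm, Polynomial.coeff_mul_X_pow] using this

end Helpers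


theorem cb_conv : ∀ m : ℕ, ∑ i ∈ range (m+1), centralBinom i * centralBinom (m - i) = 4 ^ m := by
  intro m
  induction m with
  | zero => simp [centralBinom]
  | succ m ih =>
    set S := ∑ i ∈ range (m+1), centralBinom i * centralBinom (m - i) with hS
    -- T : weighted sum
    have hT : 2 * (∑ j ∈ range (m+1), j * (centralBinom j * centralBinom (m - j))) = m * S := by
      have h1 : ∑ j ∈ range (m+1), (m - j) * (centralBinom j * centralBinom (m - j))
          = ∑ j ∈ range (m+1), j * (centralBinom j * centralBinom (m - j)) := by
        rw [← Finset.sum_range_reflect (fun j => j * (centralBinom j * centralBinom (m - j))) (m+1)]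
        apply Finset.sum_congr rfl
        intro j hj
        simp only [Finset.mem_range] at hj
        have hj' : j ≤ m := by omega
        have : m + 1 - 1 - j = m - j := by omega
        rw [this]
        have : m - (m - j) = j := by omega
        rw [this]
        ring
      have h2 : ∑ j ∈ range (m+1), (j + (m - j)) * (centralBinom j * centralBinom (m - j))
          = 2 * ∑ j ∈ range (m+1), j * (centralBinom j * centralBinom (m - j)) := by
        rw [Finset.sum_congr rfl (fun j hj => by rw [add_mul]), Finset.sum_add_distrib, h1]
        ring
      rw [← h2, hS, Finset.mul_sum]
      apply Finset.sum_congr rfl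
      intro j hj
      simp only [Finset.mem_range] at hj
      have : j + (m - j) = m := by omega
      rw [this]
    -- A : weighted sum for m+1
    have hA : ∑ i ∈ range (m+2), i * (centralBinom i * centralBinom (m + 1 - i))
        = ∑ j ∈ range (m+1), (2 * (2*j+1) * centralBinom j) * centralBinom (m - j) := by
      rw [Finset.sum_range_succ' (fun i => i * (centralBinom i * centralBinom (m + 1 - i))) (m+1)]
      simp only [Nat.zero_mul, add_zero]
      apply Finset.sum_congr rfl
      intro j hj
      have : m + 1 - (j + 1) = m - j := by omega
      rw [this, ← mul_assoc, succ_mul_centralBinom_succ j]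
    have key : (m+1) * (∑ i ∈ range (m+2), centralBinom i * centralBinom (m + 1 - i))
        = (m+1) * 4 ^ (m+1) := by
      rw [Finset.mul_sum]
      have step1 : ∑ i ∈ range (m+2), (m+1) * (centralBinom i * centralBinom (m + 1 - i))
          = 2 * ∑ i ∈ range (m+2), i * (centralBinom i * centralBinom (m + 1 - i)) := by
        have h1 : ∑ i ∈ range (m+2), (m + 1 - i) * (centralBinom i * centralBinom (m + 1 - i))
            = ∑ i ∈ range (m+2), i * (centralBinom i * centralBinom (m + 1 - i)) := by
          rw [← Finset.sum_range_reflect (fun i => i * (centralBinom i * centralBinom (m + 1 - i))) (m+2)]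
          apply Finset.sum_congr rfl
          intro j hj
          simp only [Finset.mem_range] at hj
          have e1 : m + 2 - 1 - j = m + 1 - j := by omega
          have e2 : m + 1 - (m + 1 - j) = j := by omega
          rw [e1, e2]
          ring
        calc ∑ i ∈ range (m+2), (m+1) * (centralBinom i * centralBinom (m + 1 - i))
            = ∑ i ∈ range (m+2), (i + (m + 1 - i)) * (centralBinom i * centralBinom (m + 1 - i)) := by
              apply Finset.sum_congr rfl
              intro i hi
              simp only [Finset.mem_range] at hi
              have : i + (m + 1 - i) = m + 1 := by omega
              rw [this]
          _ = _ := by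
              rw [Finset.sum_congr rfl (fun j hj => by rw [add_mul]), Finset.sum_add_distrib, h1]
              ring
      rw [step1, hA]
      set T := ∑ j ∈ range (m+1), j * (centralBinom j * centralBinom (m-j)) with hTdef
      have expand : ∑ j ∈ range (m+1), (2 * (2*j+1) * centralBinom j) * centralBinom (m - j)
          = 4 * T + 2 * S := by
        rw [hTdef, hS, Finset.mul_sum, Finset.mul_sum, ← Finset.sum_add_distrib]
        apply Finset.sum_congr rfl
        intro j hj
        ring
      rw [expand]
      calc 2 * (4 * T + 2 * S) = 4 * (2 * T) + 4 * S := by ring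
        _ = 4 * (m * S) + 4 * S := by rw [hT]
        _ = (m+1) * 4 ^ (m+1) := by rw [ih]; ring
    exact Nat.eq_of_mul_eq_mul_left (by omega) key


theorem key_sq {R : Type*} [CommRing R] (a : R) (m M : ℕ) (hmM : m ≤ M)
    (ha : a ^ (m+1) = 0) :
    (∑ i ∈ Finset.range (m+1), C (((4^(m-i) * Nat.centralBinom i : ℕ) : R) * a ^ i) * X ^ i) ^ 2
      = C ((((4^m : ℕ) : R))^2) * ∑ i ∈ Finset.range (M+1), C (a ^ i) * X ^ i := by
  set f : R[X] := ∑ i ∈ Finset.range (m+1), C (((4^(m-i) * Nat.centralBinom i : ℕ) : R) * a ^ i) * X ^ i with hf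
  have hzero : ∀ s : ℕ, m < s → a ^ s = 0 := by
    intro s hs
    calc a ^ s = a ^ (m+1) * a ^ (s - (m+1)) := by rw [← pow_add]; congr 1; omega
    _ = 0 := by rw [ha, zero_mul]
  have hcf : ∀ k, f.coeff k = if k ≤ m then ((4^(m-k) * Nat.centralBinom k : ℕ) : R) * a ^ k else 0 := by
    intro k
    rw [hf, finset_sum_coeff]
    simp only [coeff_C_mul, coeff_X_pow, mul_ite, mul_one, mul_zero]
    rw [Finset.sum_ite_eq (Finset.range (m+1)) k]
    simp [Nat.lt_succ_iff]
  ext s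
  rw [sq, coeff_mul, coeff_C_mul, finset_sum_coeff]
  simp only [coeff_C_mul, coeff_X_pow, mul_ite, mul_one, mul_zero]
  rw [Finset.sum_ite_eq (Finset.range (M+1)) s]
  simp only [Finset.mem_range, Nat.lt_succ_iff]
  rw [Finset.Nat.sum_antidiagonal_eq_sum_range_succ (fun i j => f.coeff i * f.coeff j) s]
  by_cases hsm : s ≤ m
  · rw [if_pos (le_trans hsm hmM)]
    have hterm : ∀ i ∈ Finset.range (s+1),
        f.coeff i * f.coeff (s - i)
          = ((4^(m-i) * Nat.centralBinom i * (4^(m-(s-i)) * Nat.centralBinom (s-i)) : ℕ) : R) * a ^ s := by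
      intro i hi
      simp only [Finset.mem_range, Nat.lt_succ_iff] at hi
      have hpow : a ^ i * a ^ (s - i) = a ^ s := by rw [← pow_add]; congr 1; omega
      rw [hcf, hcf, if_pos (by omega : i ≤ m), if_pos (by omega : s - i ≤ m)]
      push_cast
      rw [mul_mul_mul_comm, hpow]
    rw [Finset.sum_congr rfl hterm, ← Finset.sum_mul, ← Nat.cast_sum]
    have hnat : ∑ i ∈ Finset.range (s+1),
        4^(m-i) * Nat.centralBinom i * (4^(m-(s-i)) * Nat.centralBinom (s-i)) = 4^(2*m) := by
      have : ∀ i ∈ Finset.range (s+1),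
          4^(m-i) * Nat.centralBinom i * (4^(m-(s-i)) * Nat.centralBinom (s-i))
            = 4^(2*m-s) * (Nat.centralBinom i * Nat.centralBinom (s-i)) := by
        intro i hi
        simp only [Finset.mem_range, Nat.lt_succ_iff] at hi
        have h4 : 4^(m-i) * 4^(m-(s-i)) = (4:ℕ)^(2*m-s) := by
          rw [← pow_add]; congr 1; omega
        calc 4^(m-i) * Nat.centralBinom i * (4^(m-(s-i)) * Nat.centralBinom (s-i))
            = (4^(m-i) * 4^(m-(s-i))) * (Nat.centralBinom i * Nat.centralBinom (s-i)) := by ring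
          _ = _ := by rw [h4]
      rw [Finset.sum_congr rfl this, ← Finset.mul_sum, cb_conv s, ← pow_add]
      congr 1
      omega
    rw [hnat]
    push_cast
    ring
  · have hR : (if s ≤ M then a ^ s else 0) = 0 := by
      split
      · exact hzero s (by omega)
      · rfl
    rw [hR, mul_zero]
    apply Finset.sum_eq_zero
    intro i hi
    simp only [Finset.mem_range, Nat.lt_succ_iff] at hi
    rw [hcf, hcf]
    by_cases h1 : i ≤ m
    · by_cases h2 : s - i ≤ m
      · rw [if_pos h1, if_pos h2]
        have hpow : a ^ i * a ^ (s - i) = a ^ s := by rw [← pow_add]; congr 1; omega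
        rw [mul_mul_mul_comm, hpow, hzero s (by omega), mul_zero]
      · rw [if_neg h2, mul_zero]
    · rw [if_neg h1, zero_mul]


lemma reflect_finset_sum {R : Type*} [CommRing R] (N : ℕ) {ι : Type*} (s : Finset ι) (g : ι → R[X]) :
    reflect N (∑ i ∈ s, g i) = ∑ i ∈ s, reflect N (g i) := by
  induction s using Finset.cons_induction with
  | empty => simp
  | cons i s hi ih => rw [Finset.sum_cons, Finset.sum_cons, reflect_add, ih]

theorem key_sq_desc {R : Type*} [CommRing R] (a : R) (m M : ℕ) (hmM : m ≤ M) (hM2 : M ≤ 2*m)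
    (ha : a ^ (m+1) = 0) :
    (reflect m (∑ i ∈ Finset.range (m+1), C (((4^(m-i) * Nat.centralBinom i : ℕ) : R) * a ^ i) * X ^ i)) ^ 2
      = C ((((4^m : ℕ) : R))^2) * (X ^ (2*m - M) *
          ∑ i ∈ Finset.range (M+1), C (a ^ i) * X ^ (M - i)) := by
  set f : R[X] := ∑ i ∈ Finset.range (m+1), C (((4^(m-i) * Nat.centralBinom i : ℕ) : R) * a ^ i) * X ^ i with hf
  have hdeg : f.natDegree ≤ m := by
    apply natDegree_sum_le_of_forall_le
    intro i hi
    simp only [Finset.mem_range, Nat.lt_succ_iff] at hi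
    exact le_trans (natDegree_C_mul_X_pow_le _ _) hi
  have h1 : (reflect m f) ^ 2 = reflect (2*m) (f ^ 2) := by
    rw [sq, sq, ← reflect_mul f f hdeg hdeg]
    congr 1
    omega
  rw [h1, key_sq a m M hmM ha, reflect_C_mul, reflect_finset_sum]
  congr 1
  rw [Finset.mul_sum]
  apply Finset.sum_congr rfl
  intro i hi
  simp only [Finset.mem_range, Nat.lt_succ_iff] at hi
  rw [reflect_C_mul_X_pow, revAt_le (by omega : i ≤ 2*m)]
  rw [show 2*m - i = (2*m - M) + (M - i) by omega, pow_add]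
  ring


/-- The geometric-sum identity for our polynomial. -/
lemma geom_identity {R : Type*} [CommRing R] (a : R) (n : ℕ) :
    (∑ i ∈ Finset.range (2*n+1), C (a ^ i) * X ^ (2*n - i)) * (C a - X)
      = C (a ^ (2*n+1)) - X ^ (2*n+1) := by
  have h := geom_sum₂_mul (C a) (X : R[X]) (2*n+1)
  rw [C_pow, ← h]
  congr 1
  apply Finset.sum_congr rfl
  intro i hi
  rw [C_pow]
  norm_num

/-- Step A : a is in every prime ideal. -/
lemma stepA {R : Type*} [CommRing R] [Algebra ℚ R] (a : R) (n : ℕ) (hn : 0 < n) (q : R[X])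
    (hq : (∑ i ∈ Finset.range (2*n+1), C (a ^ i) * X ^ (2*n - i)) = q ^ 2) :
    IsNilpotent a := by
  rw [nilpotent_iff_mem_prime]
  intro p hp
  haveI := hp
  set D := R ⧸ p
  set K := FractionRing D
  set ψ : R →+* K := (algebraMap D K).comp (Ideal.Quotient.mk p) with hψ
  haveI : CharZero D := charZero_of_injective_algebraMap (algebraMap ℚ D).injective
  haveI : CharZero K := charZero_of_injective_algebraMap (IsFractionRing.injective D K)
  set c : K := ψ a with hc
  set Q : K[X] := q.map ψ with hQ
  -- mapped identity
  have hgeom := geom_identity a n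
  rw [hq] at hgeom
  have hmap : Q ^ 2 * (C c - X) = C (c ^ (2*n+1)) - X ^ (2*n+1) := by
    have := congrArg (Polynomial.map ψ) hgeom
    simp only [Polynomial.map_mul, Polynomial.map_pow, Polynomial.map_sub, map_C, map_X,
      map_pow] at this
    rw [← C_pow] at this
    exact this
  by_contra hmem
  have hc0 : c ≠ 0 := by
    intro h0
    apply hmem
    have : (Ideal.Quotient.mk p) a = 0 := by
      apply IsFractionRing.injective D K
      rw [map_zero]
      exact h0
    exact (Ideal.Quotient.eq_zero_iff_mem).mp this
  have hsep : (X ^ (2*n+1) - C (c ^ (2*n+1))).Separable := by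
    apply separable_X_pow_sub_C
    · exact Nat.cast_ne_zero.mpr (by omega : 2*n+1 ≠ 0)
    · exact pow_ne_zero _ hc0
  have hsf : Squarefree (X ^ (2*n+1) - C (c ^ (2*n+1))) := hsep.squarefree
  have hdvd : Q * Q ∣ X ^ (2*n+1) - C (c ^ (2*n+1)) := by
    refine ⟨X - C c, ?_⟩
    have : Q * Q * (X - C c) = -(Q ^ 2 * (C c - X)) := by ring
    rw [this, hmap]
    ring
  have hu : IsUnit Q := hsf Q hdvd
  -- degree contradiction
  obtain ⟨r, -, hr⟩ := Polynomial.isUnit_iff.mp hu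
  have hdeg : (Q ^ 2 * (C c - X)).natDegree ≤ 1 := by
    apply le_trans (natDegree_mul_le)
    have h1 : (Q ^ 2).natDegree = 0 := by
      rw [← hr, ← C_pow, natDegree_C]
    have h2 : (C c - X).natDegree ≤ 1 := by
      apply le_trans (natDegree_sub_le _ _)
      simp [natDegree_C, natDegree_X]
    omega
  rw [hmap] at hdeg
  have : (C (c ^ (2*n+1)) - X ^ (2*n+1)).natDegree = 2*n+1 := by
    have h3 : C (c ^ (2*n+1)) - X ^ (2*n+1) = -(X ^ (2*n+1) - C (c ^ (2*n+1))) := by ring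
    rw [h3, natDegree_neg, natDegree_X_pow_sub_C]
  omega

/-- Step B : structure of a square root of X^(2n) over a domain. -/
lemma stepB_domain {D : Type*} [CommRing D] [IsDomain D] (Q : D[X]) (n : ℕ)
    (h : Q ^ 2 = X ^ (2*n)) :
    (∀ j, j ≠ n → Q.coeff j = 0) ∧ (Q.coeff n) ^ 2 = 1 := by
  have hQ0 : Q ≠ 0 := by
    intro h0
    rw [h0] at h
    have : (X : D[X]) ^ (2*n) ≠ 0 := pow_ne_zero _ X_ne_zero
    simp at h
    exact this h.symm
  have hlc : Q.leadingCoeff ^ 2 ≠ 0 := pow_ne_zero _ (leadingCoeff_ne_zero.mpr hQ0)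
  have hdeg : Q.natDegree = n := by
    have h1 : (Q ^ 2).natDegree = 2 * Q.natDegree := natDegree_pow' hlc
    rw [h] at h1
    rw [natDegree_X_pow] at h1
    omega
  have htr : Q.natTrailingDegree = n := by
    have h1 : (Q * Q).natTrailingDegree = Q.natTrailingDegree + Q.natTrailingDegree :=
      natTrailingDegree_mul hQ0 hQ0
    rw [← sq, h, natTrailingDegree_X_pow] at h1
    omega
  constructor
  · intro j hj
    rcases lt_or_gt_of_ne hj with hlt | hgt
    · apply coeff_eq_zero_of_lt_natTrailingDegree
      omega
    · apply coeff_eq_zero_of_natDegree_lt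
      omega
  · have h1 : (Q ^ 2).leadingCoeff = Q.leadingCoeff ^ 2 := leadingCoeff_pow' hlc
    rw [h] at h1
    rw [leadingCoeff_X_pow] at h1
    rw [leadingCoeff, hdeg] at h1
    exact h1.symm


lemma main_aux {R : Type*} [CommRing R] [Algebra ℚ R] (a : R) (n : ℕ) (hn : 0 < n) (q : R[X])
    (hq : (∑ i ∈ Finset.range (2*n+1), C (a ^ i) * X ^ (2*n - i)) = q ^ 2)
    (ha2 : a ^ (n+2) = 0)
    (hBj : ∀ j, j ≠ n → IsNilpotent (q.coeff j))
    (hBn : IsNilpotent ((q.coeff n) ^ 2 - 1)) :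
    a ^ (n+1) = 0 := by
  set f : R[X] := ∑ i ∈ Finset.range ((n+1)+1),
      C (((4^((n+1)-i) * Nat.centralBinom i : ℕ) : R) * a ^ i) * X ^ i with hf
  set r : R[X] := reflect (n+1) f with hrdef
  have hr : r ^ 2 = C ((((4^(n+1) : ℕ) : R))^2) * (X ^ 2 * q ^ 2) := by
    have h := key_sq_desc a (n+1) (2*n) (by omega) (by omega)
      (by rw [show (n+1)+1 = n+2 by omega]; exact ha2)
    rw [show 2*(n+1) - 2*n = 2 by omega, hq] at h
    exact h
  have hrc : ∀ j, r.coeff j =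
      if j ≤ n+1 then ((4^j * Nat.centralBinom ((n+1)-j) : ℕ) : R) * a ^ ((n+1)-j) else 0 := by
    intro j
    rw [hrdef, coeff_reflect]
    by_cases hj : j ≤ n+1
    · rw [revAt_le hj, hf, coeff_sum_C_X_pow, if_pos (by omega : (n+1)-j ≤ n+1), if_pos hj]
      have he : (n+1) - ((n+1)-j) = j := by omega
      rw [he]
    · rw [revAt_eq_self_of_lt (by omega), hf, coeff_sum_C_X_pow, if_neg (by omega), if_neg hj]
  have hanilR : IsNilpotent a := ⟨n+2, ha2⟩
  apply eq_zero_of_localization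
  intro J hJ
  haveI := hJ.isPrime
  set S := Localization.AtPrime J with hS
  set phi : R →+* S := algebraMap R S with hphi
  show phi (a ^ (n+1)) = 0
  -- units
  have h2R : IsUnit (2:R) := by
    have := isUnit_natCast_qalg R 2 (by omega); simpa using this
  have h2S : IsUnit (2:S) := by
    have := h2R.map phi; rwa [map_ofNat] at this
  have hkR : IsUnit (((4^(n+1) : ℕ)) : R) := isUnit_natCast_qalg R _ (by positivity)
  have hCB : IsUnit ((Nat.centralBinom (n+1) : ℕ) : R) :=
    isUnit_natCast_qalg R _ (Nat.centralBinom_ne_zero _)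
  -- sign
  obtain ⟨σ, hσ2, hσnil⟩ := local_sign h2S (phi (q.coeff n)) (by
    have := (hBn.map phi)
    simpa only [map_sub, map_pow, map_one] using this)
  set k : R := ((4^(n+1) : ℕ) : R) with hk
  set Qs : S[X] := C σ * q.map phi with hQs
  have hQs2 : Qs ^ 2 = (q.map phi) ^ 2 := by
    rw [hQs, mul_pow, ← C_pow, hσ2, map_one, one_mul]
  set u : S[X] := r.map phi + C (phi k) * X * Qs with hu
  set v : S[X] := r.map phi - C (phi k) * X * Qs with hv
  have hrS : (r.map phi) ^ 2 = C (phi k) ^ 2 * (X ^ 2 * (q.map phi) ^ 2) := by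
    have h := congrArg (Polynomial.map phi) hr
    simp only [Polynomial.map_mul, Polynomial.map_pow, map_C, map_X, map_pow] at h
    exact h
  have huv : u * v = 0 := by
    have hexp : u * v = (r.map phi) ^ 2 - C (phi k) ^ 2 * (X ^ 2 * Qs ^ 2) := by
      rw [hu, hv]; ring
    rw [hexp, hQs2, hrS]; ring
  -- xq coefficients
  have hxq : ∀ j, (C (phi k) * X * Qs).coeff j
      = if j = 0 then 0 else phi k * (σ * phi (q.coeff (j-1))) := by
    intro j
    rw [mul_assoc, coeff_C_mul]
    cases j with
    | zero =>
      rw [Polynomial.mul_coeff_zero, coeff_X_zero, zero_mul, mul_zero, if_pos rfl]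
    | succ d =>
      rw [coeff_X_mul, if_neg (Nat.succ_ne_zero d), hQs, coeff_C_mul, coeff_map,
        Nat.succ_sub_one]
  -- nilpotency of u - 2k X^{n+1}
  have hν : IsNilpotent (u - C (2 * phi k) * X ^ (n+1)) := by
    rw [Polynomial.isNilpotent_iff]
    intro j
    have hcu : (u - C (2 * phi k) * X ^ (n+1)).coeff j
        = phi (r.coeff j) + (C (phi k) * X * Qs).coeff j
          - (if j = n+1 then 2 * phi k else 0) := by
      rw [hu, coeff_sub, coeff_add, coeff_map, coeff_C_mul, coeff_X_pow]
      simp only [mul_ite, mul_one, mul_zero]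
    rw [hcu, hxq j]
    rcases lt_trichotomy j (n+1) with hlt | heq | hgt
    · rw [if_neg (show ¬ j = n+1 by omega), sub_zero, hrc, if_pos (show j ≤ n+1 by omega)]
      apply nil_add
      · exact (nil_mul (nil_pow_ge_one hanilR (show 1 ≤ (n+1)-j by omega))).map phi
      · by_cases hj0 : j = 0
        · rw [if_pos hj0]; exact ⟨1, by simp⟩
        · rw [if_neg hj0]
          exact nil_mul (nil_mul ((hBj (j-1) (show j-1 ≠ n by omega)).map phi))
    · subst heq
      rw [if_pos rfl, if_neg (show ¬ n+1 = 0 by omega), hrc, if_pos le_rfl]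
      have hr1 : ((4^(n+1) * Nat.centralBinom ((n+1)-(n+1)) : ℕ) : R) * a ^ ((n+1)-(n+1)) = k := by
        rw [Nat.sub_self, Nat.centralBinom_zero, mul_one, pow_zero, mul_one, hk]
      rw [hr1]
      have : phi k + phi k * (σ * phi (q.coeff ((n+1)-1))) - 2 * phi k
          = phi k * (σ * phi (q.coeff n) - 1) := by
        rw [Nat.add_sub_cancel]; ring
      rw [this]
      exact nil_mul hσnil
    · rw [if_neg (show ¬ j = n+1 by omega), sub_zero, hrc,
        if_neg (show ¬ j ≤ n+1 by omega), map_zero, if_neg (show ¬ j = 0 by omega), zero_add]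
      exact nil_mul (nil_mul ((hBj (j-1) (show j-1 ≠ n by omega)).map phi))
  have hv0 : v = 0 := kill u v (2 * phi k) (n+1) (h2S.mul (hkR.map phi)) huv hν
  -- extract the constant coefficient
  have hc0 := congrArg (fun p => Polynomial.coeff p 0) hv0
  simp only [hv, coeff_sub, coeff_zero, coeff_map] at hc0
  rw [hxq 0, if_pos rfl, sub_zero, hrc 0, if_pos (by omega)] at hc0
  have hr0 : ((4^0 * Nat.centralBinom ((n+1)-0) : ℕ) : R) * a ^ ((n+1)-0)
      = ((Nat.centralBinom (n+1) : ℕ) : R) * a ^ (n+1) := by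
    norm_num
  rw [hr0, map_mul] at hc0
  exact (hCB.map phi).mul_right_eq_zero.mp hc0

/-- Abel's lemma on odd nilpotency: for a commutative ring `R` containing `ℚ`,
`a ∈ R` and `n ≥ 1`, the polynomial
`(t^{2n+1} - a^{2n+1})/(t - a) = ∑_{i=0}^{2n} a^i t^{2n-i}` is a square in `R[t]`
iff `a^{n+1} = 0`. -/
theorem abel_odd_nilpotency (R : Type*) [CommRing R] [Algebra ℚ R] (a : R) (n : ℕ)
    (hn : 0 < n) :
    (∃ q : Polynomial R,
        (∑ i ∈ Finset.range (2 * n + 1), C (a ^ i) * X ^ (2 * n - i)) = q ^ 2) ↔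
      a ^ (n + 1) = 0 := by
  constructor
  · rintro ⟨q, hq⟩
    have hA : IsNilpotent a := stepA a n hn q hq
    -- Step B: nilpotency of the coefficients of q
    have hB : (∀ j, j ≠ n → IsNilpotent (q.coeff j)) ∧ IsNilpotent ((q.coeff n) ^ 2 - 1) := by
      have key : ∀ (p : Ideal R), p.IsPrime →
          (∀ j, j ≠ n → q.coeff j ∈ p) ∧ (q.coeff n) ^ 2 - 1 ∈ p := by
        intro p hp
        haveI := hp
        have hap : a ∈ p := nilpotent_iff_mem_prime.mp hA p hp
        have ha0 : (Ideal.Quotient.mk p) a = 0 := Ideal.Quotient.eq_zero_iff_mem.mpr hap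
        have hmap : (q.map (Ideal.Quotient.mk p)) ^ 2 = X ^ (2*n) := by
          have h1 := congrArg (Polynomial.map (Ideal.Quotient.mk p)) hq
          rw [Polynomial.map_pow] at h1
          rw [← h1, Polynomial.map_sum]
          rw [Finset.sum_eq_single 0
            (fun i hi hne => by
              simp [Polynomial.map_mul, Polynomial.map_pow, map_C, ha0, zero_pow hne])
            (fun h => absurd (Finset.mem_range.mpr (by omega)) h)]
          simp
        obtain ⟨hj, hn2⟩ := stepB_domain (q.map (Ideal.Quotient.mk p)) n hmap
        constructor
        · intro j hjn
          have hcf := hj j hjn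
          rw [coeff_map] at hcf
          exact Ideal.Quotient.eq_zero_iff_mem.mp hcf
        · have hcf := hn2
          rw [coeff_map] at hcf
          have h2 : (Ideal.Quotient.mk p) ((q.coeff n) ^ 2 - 1) = 0 := by
            rw [map_sub, map_one, map_pow, hcf, sub_self]
          exact Ideal.Quotient.eq_zero_iff_mem.mp h2
      constructor
      · intro j hj
        rw [nilpotent_iff_mem_prime]
        exact fun p hp => (key p hp).1 j hj
      · rw [nilpotent_iff_mem_prime]
        exact fun p hp => (key p hp).2
    -- reduction to the quotient by (a^(n+2))
    set I : Ideal R := Ideal.span {a ^ (n+2)} with hI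
    set mk' : R →+* (R ⧸ I) := Ideal.Quotient.mk I with hmk
    have hq' : (∑ i ∈ Finset.range (2*n+1), C ((mk' a) ^ i) * X ^ (2*n - i))
        = (q.map mk') ^ 2 := by
      have h1 := congrArg (Polynomial.map mk') hq
      rw [Polynomial.map_pow] at h1
      rw [← h1, Polynomial.map_sum]
      apply Finset.sum_congr rfl
      intro i hi
      simp [Polynomial.map_mul, Polynomial.map_pow, map_C]
    have ha2' : (mk' a) ^ (n+2) = 0 := by
      rw [← map_pow]
      exact Ideal.Quotient.eq_zero_iff_mem.mpr (Ideal.subset_span (Set.mem_singleton _))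
    have haux : (mk' a) ^ (n+1) = 0 := by
      apply main_aux (mk' a) n hn (q.map mk') hq' ha2'
      · intro j hj
        rw [coeff_map]
        exact (hB.1 j hj).map mk'
      · rw [coeff_map]
        have hnb := (hB.2).map mk'
        simpa only [map_sub, map_pow, map_one] using hnb
    have hmem : a ^ (n+1) ∈ I := by
      apply Ideal.Quotient.eq_zero_iff_mem.mp
      rw [map_pow]
      exact haux
    obtain ⟨y, hy⟩ := Ideal.mem_span_singleton'.mp hmem
    obtain ⟨t, ht⟩ := hA
    have hiter : ∀ s : ℕ, a ^ (n+1) = (y*a) ^ s * a ^ (n+1) := by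
      intro s
      induction s with
      | zero => simp
      | succ s ih =>
        have hstep : a ^ (n+1) = (y*a) * a ^ (n+1) := by
          calc a ^ (n+1) = y * a ^ (n+2) := hy.symm
            _ = (y*a) * a ^ (n+1) := by ring
        calc a ^ (n+1) = (y*a) * a ^ (n+1) := hstep
          _ = (y*a) * ((y*a) ^ s * a ^ (n+1)) := by rw [← ih]
          _ = (y*a) ^ (s+1) * a ^ (n+1) := by ring
    have hfin := hiter t
    rw [mul_pow, ht, mul_zero, zero_mul] at hfin
    exact hfin
  · intro ha
    set f : R[X] := ∑ i ∈ Finset.range (n+1),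
        C (((4^(n-i) * Nat.centralBinom i : ℕ) : R) * a ^ i) * X ^ i with hf
    refine ⟨C (algebraMap ℚ R (((4:ℚ)^n)⁻¹)) * reflect n f, ?_⟩
    have h := key_sq_desc a n (2*n) (by omega) (by omega) ha
    rw [show 2*n - 2*n = 0 by omega, pow_zero, one_mul] at h
    have hscal : (algebraMap ℚ R (((4:ℚ)^n)⁻¹)) ^ 2 * ((((4^n : ℕ) : R)) ^ 2) = 1 := by
      have h4 : (((4^n : ℕ)) : R) = algebraMap ℚ R ((4:ℚ)^n) := by
        rw [← map_natCast (algebraMap ℚ R) (4^n)]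
        norm_num
      rw [h4, ← map_pow, ← map_pow, ← map_mul, ← mul_pow,
        inv_mul_cancel₀ (by positivity : ((4:ℚ)^n) ≠ 0), one_pow, map_one]
    calc (∑ i ∈ Finset.range (2 * n + 1), C (a ^ i) * X ^ (2 * n - i))
        = C ((algebraMap ℚ R (((4:ℚ)^n)⁻¹)) ^ 2 * ((((4^n : ℕ) : R)) ^ 2)) *
            ∑ i ∈ Finset.range (2*n+1), C (a ^ i) * X ^ (2*n - i) := by
          rw [hscal, map_one, one_mul]
      _ = C ((algebraMap ℚ R (((4:ℚ)^n)⁻¹)) ^ 2) * (C ((((4^n : ℕ) : R)) ^ 2) *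
            ∑ i ∈ Finset.range (2*n+1), C (a ^ i) * X ^ (2*n - i)) := by
          rw [C_mul]; ring
      _ = C ((algebraMap ℚ R (((4:ℚ)^n)⁻¹)) ^ 2) * (reflect n f) ^ 2 := by rw [← h]
      _ = (C (algebraMap ℚ R (((4:ℚ)^n)⁻¹)) * reflect n f) ^ 2 := by
          rw [mul_pow, ← C_pow]
end

section
/- For every integer n > 0, the coefficient of s^{n+1} in the formal power series √((1-s^{2n+1})/(1-s)) over ℚ is nonzero; more precisely, modulo s^{n+2} this power series is congruent to (1-s)^{-1/2}, all of whose coefficients are nonzero. -/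
open PowerSeries Finset

lemma ring_choose_succ (r : ℚ) (k : ℕ) :
    (k + 1 : ℚ) * Ring.choose r (k + 1) = Ring.choose r k * (r - k) := by
  have h1 := Ring.descPochhammer_eq_factorial_smul_choose r (k + 1)
  have h0 := Ring.descPochhammer_eq_factorial_smul_choose r k
  rw [descPochhammer_succ_right, Polynomial.smeval_mul, h0] at h1
  have hx : (Polynomial.X - (k : Polynomial ℤ)).smeval r = r - k := by
    simp [Polynomial.smeval_sub, Polynomial.smeval_X, Polynomial.smeval_natCast]
  rw [hx] at h1
  have this1 : ((k+1).factorial : ℚ) * Ring.choose r (k+1)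
      = (k.factorial : ℚ) * (Ring.choose r k * (r - k)) := by
    simpa [nsmul_eq_mul, mul_assoc] using h1.symm
  rw [Nat.factorial_succ, Nat.cast_mul] at this1
  have hk : (k.factorial : ℚ) ≠ 0 := by exact_mod_cast Nat.factorial_ne_zero _
  apply mul_left_cancel₀ hk
  rw [← this1]; push_cast; ring

lemma ring_choose_neg_one (k : ℕ) : Ring.choose (-1 : ℚ) k = (-1) ^ k := by
  induction k with
  | zero => simp [Ring.choose_zero_right]
  | succ k ih =>
    have h := ring_choose_succ (-1 : ℚ) k
    have hk : (k + 1 : ℚ) ≠ 0 := by positivity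
    rw [ih] at h
    apply mul_left_cancel₀ hk
    rw [h]; ring

lemma ring_choose_neg_half (k : ℕ) :
    Ring.choose (-(1/2) : ℚ) k = (-1) ^ k * (Nat.choose (2 * k) k : ℚ) / 4 ^ k := by
  induction k with
  | zero => simp [Ring.choose_zero_right]
  | succ k ih =>
    have h := ring_choose_succ (-(1/2) : ℚ) k
    rw [ih] at h
    have hk : (k + 1 : ℚ) ≠ 0 := by positivity
    have hc : ((k+1) : ℚ) * (Nat.choose (2*(k+1)) (k+1) : ℚ)
        = 2 * (2 * k + 1) * (Nat.choose (2*k) k : ℚ) := by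
      have := Nat.succ_mul_centralBinom_succ k
      have := congrArg (fun m : ℕ => (m : ℚ)) this
      push_cast at this
      simpa [Nat.centralBinom] using this
    apply mul_left_cancel₀ hk
    rw [h]
    have h4 : ((4:ℚ)) ^ (k+1) ≠ 0 := by positivity
    push_cast at hc
    field_simp
    linear_combination ((-1) ^ k * 4 ^ k * 2) * hc

lemma central_conv (k : ℕ) :
    ∑ ij ∈ Finset.HasAntidiagonal.antidiagonal k,
      ((Nat.choose (2 * ij.1) ij.1 : ℚ) / 4 ^ ij.1) * ((Nat.choose (2 * ij.2) ij.2 : ℚ) / 4 ^ ij.2)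
      = 1 := by
  have h := Ring.add_choose_eq (r := (-(1/2) : ℚ)) (s := (-(1/2) : ℚ)) k (Commute.all _ _)
  have hsum : (-(1/2) : ℚ) + -(1/2) = -1 := by norm_num
  rw [hsum, ring_choose_neg_one] at h
  have h2 : ((-1 : ℚ)) ^ k = ∑ ij ∈ Finset.HasAntidiagonal.antidiagonal k, (-1) ^ (ij.1 + ij.2) *
      (((Nat.choose (2 * ij.1) ij.1 : ℚ) / 4 ^ ij.1) *
       ((Nat.choose (2 * ij.2) ij.2 : ℚ) / 4 ^ ij.2)) := by
    rw [h]
    refine Finset.sum_congr rfl fun ij _ => ?_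
    rw [ring_choose_neg_half, ring_choose_neg_half, pow_add]
    ring
  have h3 : ((-1 : ℚ)) ^ k = (-1) ^ k * ∑ ij ∈ Finset.HasAntidiagonal.antidiagonal k,
      (((Nat.choose (2 * ij.1) ij.1 : ℚ) / 4 ^ ij.1) *
       ((Nat.choose (2 * ij.2) ij.2 : ℚ) / 4 ^ ij.2)) := by
    rw [Finset.mul_sum]
    refine h2.trans (Finset.sum_congr rfl fun ij hij => ?_)
    rw [Finset.HasAntidiagonal.mem_antidiagonal.mp hij]
  have hne : ((-1 : ℚ)) ^ k ≠ 0 := by simp [pow_ne_zero]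
  exact mul_left_cancel₀ hne (by rw [mul_one, ← h3])

/-- For `n > 0`, the unique square root `f` (with constant term `1`) of
`(1 - s^{2n+1})/(1 - s) = 1 + s + ⋯ + s^{2n}` in `ℚ[[s]]` agrees with
`(1-s)^{-1/2} = ∑ binom(2k,k)/4^k s^k` in all coefficients up to degree `n+1`;
in particular its coefficient of `s^{n+1}` is nonzero. -/
theorem sqrt_geometric_coeff (n : ℕ) (hn : 0 < n) (f : PowerSeries ℚ)
    (h1 : PowerSeries.constantCoeff f = 1)
    (hsq : f ^ 2 = ∑ i ∈ Finset.range (2 * n + 1), (PowerSeries.X : PowerSeries ℚ) ^ i) :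
    (∀ k ≤ n + 1, PowerSeries.coeff k f = (Nat.choose (2 * k) k : ℚ) / 4 ^ k) ∧
      PowerSeries.coeff (n + 1) f ≠ 0 := by
  set a : ℕ → ℚ := fun k => PowerSeries.coeff k f with ha
  set c : ℕ → ℚ := fun k => (Nat.choose (2 * k) k : ℚ) / 4 ^ k with hc
  have ha0 : a 0 = 1 := by
    simpa [ha, PowerSeries.coeff_zero_eq_constantCoeff] using h1
  have hc0 : c 0 = 1 := by simp [hc]
  -- coefficient of f^2
  have hconv : ∀ k ≤ 2 * n, ∑ ij ∈ Finset.HasAntidiagonal.antidiagonal k, a ij.1 * a ij.2 = 1 := by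
    intro k hk
    have := congrArg (PowerSeries.coeff k) hsq
    rw [sq, PowerSeries.coeff_mul] at this
    rw [this, map_sum]
    have : ∀ i ∈ Finset.range (2 * n + 1),
        PowerSeries.coeff k ((PowerSeries.X : PowerSeries ℚ) ^ i) = if k = i then 1 else 0 :=
      fun i _ => PowerSeries.coeff_X_pow k i
    rw [Finset.sum_congr rfl this, Finset.sum_ite_eq (Finset.range (2 * n + 1)) k (fun _ => (1:ℚ))]
    simp [Nat.lt_succ_of_le hk]
  have key : ∀ k ≤ n + 1, a k = c k := by
    intro k
    induction k using Nat.strong_induction_on with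
    | _ k IH =>
      intro hkn
      match k, hkn with
      | 0, _ => rw [ha0, hc0]
      | (m+1), hkn =>
        set k := m + 1
        have hk2n : k ≤ 2 * n := by omega
        have hA := hconv k hk2n
        have hC := central_conv k
        have hmem1 : ((0 : ℕ), k) ∈ Finset.HasAntidiagonal.antidiagonal k := by simp
        have hmem2 : ((k : ℕ), 0) ∈ Finset.HasAntidiagonal.antidiagonal k := by simp
        have hne : ((0 : ℕ), k) ≠ (k, 0) := by simp [k]
        have hzero : ∀ ij ∈ Finset.HasAntidiagonal.antidiagonal k, ij ≠ ((0:ℕ), k) → ij ≠ ((k:ℕ), 0) →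
            a ij.1 * a ij.2 - c ij.1 * c ij.2 = 0 := by
          rintro ⟨i, j⟩ hij hne1 hne2
          have hij' : i + j = k := Finset.HasAntidiagonal.mem_antidiagonal.mp hij
          have hi : i ≠ 0 := fun h => hne1 (by simp [h, ← hij', h])
          have hj : j ≠ 0 := fun h => hne2 (by simp [Prod.ext_iff]; omega)
          have h1' : i < k := by omega
          have h2' : j < k := by omega
          rw [IH i h1' (by omega), IH j h2' (by omega)]
          ring
        have hsplit : ∑ ij ∈ Finset.HasAntidiagonal.antidiagonal k,
            (a ij.1 * a ij.2 - c ij.1 * c ij.2) =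
            (a 0 * a k - c 0 * c k) + (a k * a 0 - c k * c 0) := by
          exact Finset.sum_eq_add_of_mem _ _ hmem1 hmem2 hne
            (fun ij hij h' => hzero ij hij h'.1 h'.2)
        rw [Finset.sum_sub_distrib, hA, hC] at hsplit
        have : a k = c k := by
          rw [ha0, hc0] at hsplit
          linarith
        exact this
  refine ⟨key, ?_⟩
  have hk1 := key (n + 1) le_rfl
  simp only [ha, hc] at hk1
  rw [hk1]
  have hpos : (0 : ℚ) < (Nat.choose (2 * (n+1)) (n+1) : ℚ) :=
    by exact_mod_cast Nat.choose_pos (by omega)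
  have h4 : (0 : ℚ) < 4 ^ (n+1) := by positivity
  exact ne_of_gt (div_pos hpos h4)
end

section
/- Let k be a field with char k ≠ 2, and suppose P, R, Q ∈ k[x] satisfy P² − R Q² = 1. Fix an integer m > 1 and a primitive m-th root of unity ζ ∈ k, and suppose that P(ζx) = P(x), R(ζx) = ζ^{2g+2} R(x) and Q(ζx) = ζ^{-(g+1)} Q(x) for the ζ-action, where deg R = 2g+2. If moreover R is squarefree, then 2g+2 is congruent to 0 or 1 modulo m. -/
open Polynomial

lemma coeff_comp_C_mul_X {k : Type*} [CommRing k] (p : Polynomial k) (a : k) (n : ℕ) :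
    (p.comp (C a * X)).coeff n = p.coeff n * a ^ n := by
  induction p using Polynomial.induction_on' with
  | add p q hp hq => simp [add_comp, hp, hq, add_mul]
  | monomial i c =>
    rw [monomial_comp]
    simp only [mul_pow, ← C_pow, ← mul_assoc, ← C_mul]
    rw [C_mul_X_pow_eq_monomial, coeff_monomial, coeff_monomial]
    split <;> simp_all

/-- Fixed points of `μ_m` on the space of Pell solutions: if `(P,R,Q)` solves
`P² - RQ² = 1` with `R` squarefree of degree `2g+2`, and the triple is equivariant
under `x ↦ ζx` for a primitive `m`-th root of unity `ζ` (with `P`, `R`, `Q`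
homogeneous of degrees `0`, `2g+2`, `-(g+1)` mod `m`), then `2g+2 ≡ 0` or `1 (mod m)`. -/
theorem mu_m_fixed_points_congruence (k : Type*) [Field k] (h2 : (2 : k) ≠ 0)
    (m : ℕ) (hm : 1 < m) (ζ : k) (hζ : IsPrimitiveRoot ζ m) (g : ℕ)
    (P R Q : Polynomial k) (hpell : P ^ 2 - R * Q ^ 2 = 1)
    (hdeg : R.natDegree = 2 * g + 2) (hsf : Squarefree R)
    (hP : P.comp (C ζ * X) = P)
    (hR : R.comp (C ζ * X) = C (ζ ^ (2 * g + 2)) * R)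
    (hQ : C (ζ ^ (g + 1)) * Q.comp (C ζ * X) = Q) :
    (2 * g + 2) % m = 0 ∨ (2 * g + 2) % m = 1 := by
  have hR0 : R ≠ 0 := by
    intro h
    rw [h] at hdeg
    simp at hdeg
  set t := R.natTrailingDegree with ht
  clear_value t
  have hcoef : R.coeff t ≠ 0 := ht ▸ coeff_natTrailingDegree_ne_zero.mpr hR0
  -- t ≤ 1 by squarefreeness
  have ht1 : t ≤ 1 := by
    by_contra h
    push_neg at h
    have hx2 : X * X ∣ R := by
      rw [← sq, X_pow_dvd_iff]
      intro d hd
      exact coeff_eq_zero_of_lt_natTrailingDegree (by rw [← ht]; omega)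
    exact Polynomial.not_isUnit_X (hsf X hx2)
  -- congruence from equivariance
  have hcoef_eq := congrArg (fun p => p.coeff t) hR
  simp only [coeff_comp_C_mul_X, coeff_C_mul] at hcoef_eq
  have hpow : ζ ^ t = ζ ^ (2 * g + 2) := by
    rw [mul_comm (R.coeff t)] at hcoef_eq
    exact mul_right_cancel₀ hcoef hcoef_eq
  have hζ0 : ζ ≠ 0 := hζ.ne_zero (by omega)
  have hdvd : m ∣ (2 * g + 2 - t) := by
    rw [← hζ.pow_eq_one_iff_dvd]
    have h1 : ζ ^ t * ζ ^ (2 * g + 2 - t) = ζ ^ t * 1 := by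
      rw [← pow_add, Nat.add_sub_cancel' (by omega : t ≤ 2 * g + 2), mul_one]
      exact hpow.symm
    exact mul_left_cancel₀ (pow_ne_zero _ hζ0) h1
  have hmod : t % m = (2 * g + 2) % m := by
    obtain ⟨c, hc⟩ := hdvd
    have : 2 * g + 2 = t + m * c := by omega
    rw [this, Nat.add_mul_mod_self_left]
  have htm : t % m = t := Nat.mod_eq_of_lt (by omega)
  rw [htm] at hmod
  interval_cases t
  · exact Or.inl hmod.symm
  · exact Or.inr hmod.symm
end

section
/- Let k be a field of characteristic zero and let p ∈ k[x] be a monic polynomial of degree n with next-to-highest coefficient a (i.e. p(x) = x^n + a x^{n-1} + ⋯). Then the coefficients of p can be recovered as polynomial expressions in the coefficients of p(x) + 2(x − a)·p'(x); in particular, the map p ↦ (p + 2(x−a)p')/(2n+1) is a bijection from monic degree-n polynomials onto monic degree-n polynomials (given the constraint relating a to p). -/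
open Polynomial

private lemma coeff_F' {k : Type*} [Field k] (r : k[X]) (a : k) (i : ℕ) :
    (r + 2 * (X - C a) * derivative r).coeff i
      = (2 * i + 1) * r.coeff i - 2 * a * (i + 1) * r.coeff (i + 1) := by
  have h2 : (2 : k[X]) = C 2 := by rw [map_ofNat]
  have h : 2 * (X - C a) * derivative r
      = C 2 * (X * derivative r) - C (2 * a) * derivative r := by
    rw [C_mul, h2]; ring
  rw [h]
  rcases i with _ | i
  · simp [coeff_derivative, mul_coeff_zero]
    ring
  · simp [coeff_X_mul, coeff_derivative, mul_assoc, coeff_C_mul]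
    ring

private lemma L_inj' {k : Type*} [Field k] [CharZero k] {r : k[X]} {a : k}
    (h : r + 2 * (X - C a) * derivative r = 0) : r = 0 := by
  by_contra hr
  have h1 := coeff_F' r a r.natDegree
  rw [h, coeff_zero, coeff_natDegree_succ_eq_zero] at h1
  have h2 : ((2 * r.natDegree + 1 : ℕ) : k) ≠ 0 := Nat.cast_ne_zero.2 (by omega)
  have h3 : r.coeff r.natDegree ≠ 0 := fun hc => hr (leadingCoeff_eq_zero.1 hc)
  apply h3
  push_cast at h2
  have h4 : (2 * (r.natDegree : k) + 1) * r.coeff r.natDegree = 0 := by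
    linear_combination -h1
  exact (mul_eq_zero.1 h4).resolve_left h2

private lemma F_mem' {k : Type*} [Field k] [CharZero k] {n : ℕ} {p : k[X]} (a : k)
    (hm : p.Monic) (hd : p.natDegree = n) :
    (C (((2 * n + 1 : ℕ) : k))⁻¹ * (p + 2 * (X - C a) * derivative p)).Monic ∧
    (C (((2 * n + 1 : ℕ) : k))⁻¹ * (p + 2 * (X - C a) * derivative p)).natDegree = n := by
  have hc : ((2 * n + 1 : ℕ) : k) ≠ 0 := Nat.cast_ne_zero.2 (by omega)
  set G := C (((2 * n + 1 : ℕ) : k))⁻¹ * (p + 2 * (X - C a) * derivative p) with hG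
  have hcoeff : ∀ i, G.coeff i = (((2 * n + 1 : ℕ) : k))⁻¹ *
      ((2 * i + 1) * p.coeff i - 2 * a * (i + 1) * p.coeff (i + 1)) := by
    intro i; rw [hG, coeff_C_mul, coeff_F']
  have hn1 : G.coeff n = 1 := by
    have e1 : p.coeff n = 1 := by rw [← hd]; exact hm.coeff_natDegree
    have e2 : p.coeff (n + 1) = 0 := coeff_eq_zero_of_natDegree_lt (by omega)
    have ec : ((2 * n + 1 : ℕ) : k) = 2 * (n : k) + 1 := by push_cast; ring
    rw [hcoeff, e1, e2, mul_zero, sub_zero, mul_one, ec,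
      inv_mul_cancel₀ (by rw [← ec]; exact hc)]
  have hle : G.natDegree ≤ n := by
    rw [natDegree_le_iff_coeff_eq_zero]
    intro m hm'
    rw [hcoeff]
    rw [coeff_eq_zero_of_natDegree_lt (by omega), coeff_eq_zero_of_natDegree_lt (by omega)]
    ring
  have hdeg : G.natDegree = n :=
    le_antisymm hle (le_natDegree_of_ne_zero (by rw [hn1]; exact one_ne_zero))
  exact ⟨by rw [Monic, leadingCoeff, hdeg, hn1], hdeg⟩

/-- downward coefficient recursion for the inverse map. -/
private noncomputable def auxCoeff {k : Type*} [Field k] (n : ℕ) (q : k[X]) (a : k) : ℕ → k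
  | 0 => 1
  | (j + 1) => (((2 * n + 1 : ℕ) : k) * q.coeff (n - (j + 1))
      + 2 * a * ((n - j : ℕ) : k) * auxCoeff n q a j) / ((2 * (n - (j + 1)) + 1 : ℕ) : k)

private lemma auxCoeff_rec {k : Type*} [Field k] (n : ℕ) (q : k[X]) (a : k) {i : ℕ}
    (hi : i < n) :
    auxCoeff n q a (n - i) = (((2 * n + 1 : ℕ) : k) * q.coeff i
      + 2 * a * ((i + 1 : ℕ) : k) * auxCoeff n q a (n - (i + 1))) / ((2 * i + 1 : ℕ) : k) := by
  have e0 : n - i = (n - (i + 1)) + 1 := by omega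
  rw [e0, auxCoeff]
  have e1 : n - (n - (i + 1) + 1) = i := by omega
  have e2 : n - (n - (i + 1)) = i + 1 := by omega
  rw [e1, e2]

private lemma surj_aux {k : Type*} [Field k] [CharZero k] {n : ℕ} (hn : 1 ≤ n)
    {q : k[X]} (hqm : q.Monic) (hqd : q.natDegree = n) :
    ∃ p : k[X], p.Monic ∧ p.natDegree = n ∧
      C (((2 * n + 1 : ℕ) : k))⁻¹ * (p + 2 * (X - C (p.coeff (n - 1))) * derivative p) = q := by
  obtain ⟨m, rfl⟩ : ∃ m, n = m + 1 := ⟨n - 1, by omega⟩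
  have hc : ((2 * (m + 1) + 1 : ℕ) : k) ≠ 0 := Nat.cast_ne_zero.2 (by omega)
  set a : k := -(((2 * (m + 1) + 1 : ℕ) : k) * q.coeff m) with ha
  set f : ℕ → k := auxCoeff (m + 1) q a with hf
  set p : k[X] := ∑ i ∈ Finset.range (m + 2), monomial i (f (m + 1 - i)) with hp
  have hpc : ∀ i, p.coeff i = if i ≤ m + 1 then f (m + 1 - i) else 0 := by
    intro i
    rw [hp, finset_sum_coeff]
    simp only [coeff_monomial]
    rw [Finset.sum_ite_eq' (Finset.range (m + 2)) i (fun j => f (m + 1 - j))]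
    simp [Nat.lt_succ_iff]
  have hpn : p.coeff (m + 1) = 1 := by rw [hpc]; simp [hf, auxCoeff]
  have hhigh : ∀ i, m + 1 < i → p.coeff i = 0 := by
    intro i hi; rw [hpc]; simp [Nat.not_le.2 hi]
  have hple : p.natDegree ≤ m + 1 := natDegree_le_iff_coeff_eq_zero.2 hhigh
  have hpd : p.natDegree = m + 1 :=
    le_antisymm hple (le_natDegree_of_ne_zero (by rw [hpn]; exact one_ne_zero))
  have hpm : p.Monic := by rw [Monic, leadingCoeff, hpd, hpn]
  -- key recursion identity
  have key : ∀ i, i < m + 1 → ((2 * i + 1 : ℕ) : k) * p.coeff i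
      = ((2 * (m + 1) + 1 : ℕ) : k) * q.coeff i
        + 2 * a * ((i + 1 : ℕ) : k) * p.coeff (i + 1) := by
    intro i hi
    have hne : ((2 * i + 1 : ℕ) : k) ≠ 0 := Nat.cast_ne_zero.2 (by omega)
    rw [hpc i, hpc (i + 1), if_pos (by omega), if_pos (by omega),
      hf, auxCoeff_rec (m + 1) q a hi, mul_comm, div_mul_cancel₀ _ hne]
  -- the subleading coefficient is a
  have hpa : p.coeff m = a := by
    have h1 := key m (by omega)
    have h2 : p.coeff (m + 1) = 1 := hpn
    rw [h2, mul_one] at h1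
    have h3 : ((2 * (m + 1) + 1 : ℕ) : k) * q.coeff m = -a := by rw [ha]; ring
    rw [h3] at h1
    have hne : ((2 * m + 1 : ℕ) : k) ≠ 0 := Nat.cast_ne_zero.2 (by omega)
    apply mul_left_cancel₀ hne
    rw [h1]
    push_cast
    ring
  refine ⟨p, hpm, hpd, ?_⟩
  have hsub : m + 1 - 1 = m := by omega
  rw [hsub, hpa]
  ext i
  rw [coeff_C_mul, coeff_F']
  rcases lt_trichotomy i (m + 1) with hi | hi | hi
  · have hk := key i hi
    push_cast at hk
    have hthis : (2 * (i : k) + 1) * p.coeff i - 2 * a * ((i : k) + 1) * p.coeff (i + 1)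
        = ((2 * (m + 1) + 1 : ℕ) : k) * q.coeff i := by
      push_cast
      linear_combination hk
    rw [hthis, ← mul_assoc, inv_mul_cancel₀ hc, one_mul]
  · subst hi
    have e2 : p.coeff (m + 1 + 1) = 0 := hhigh _ (by omega)
    have eq1 : q.coeff (m + 1) = 1 := by rw [← hqd]; exact hqm.coeff_natDegree
    rw [hpn, e2, eq1, mul_zero, sub_zero, mul_one]
    rw [show (2 * ((m + 1 : ℕ) : k) + 1) = ((2 * (m + 1) + 1 : ℕ) : k) by push_cast; ring,
      inv_mul_cancel₀ hc]
  · rw [hhigh _ hi, hhigh _ (by omega), coeff_eq_zero_of_natDegree_lt (by omega)]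
    ring

/-- For a monic polynomial `p` of degree `n ≥ 1` with next-to-highest coefficient
`a = p.coeff (n-1)`, the assignment `p ↦ (p + 2(x - a)p')/(2n+1)` is a bijection
from monic degree-`n` polynomials onto monic degree-`n` polynomials: the
coefficients of `p` are polynomial expressions in those of `p + 2(x-a)p'`. -/
theorem monic_recovery_bijective (k : Type*) [Field k] [CharZero k] (n : ℕ)
    (hn : 1 ≤ n) :
    Set.BijOn
      (fun p : Polynomial k =>
        C (((2 * n + 1 : ℕ) : k))⁻¹ *
          (p + 2 * (X - C (p.coeff (n - 1))) * derivative p))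
      {p | p.Monic ∧ p.natDegree = n} {p | p.Monic ∧ p.natDegree = n} := by
  have hc : ((2 * n + 1 : ℕ) : k) ≠ 0 := Nat.cast_ne_zero.2 (by omega)
  refine ⟨fun p hp => F_mem' _ hp.1 hp.2, ?_, ?_⟩
  · -- injectivity
    obtain ⟨m, rfl⟩ : ∃ m, n = m + 1 := ⟨n - 1, by omega⟩
    rintro p₁ ⟨h1m, h1d⟩ p₂ ⟨h2m, h2d⟩ h
    have hsub : m + 1 - 1 = m := by omega
    simp only [hsub] at h
    -- first, the subleading coefficients agree
    have hcoe : ∀ (p : k[X]), p.Monic → p.natDegree = m + 1 →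
        (C (((2 * (m + 1) + 1 : ℕ) : k))⁻¹ *
          (p + 2 * (X - C (p.coeff m)) * derivative p)).coeff m
          = -(((2 * (m + 1) + 1 : ℕ) : k))⁻¹ * p.coeff m := by
      intro p hm hd
      rw [coeff_C_mul, coeff_F']
      have e1 : p.coeff (m + 1) = 1 := by rw [← hd]; exact hm.coeff_natDegree
      rw [e1, mul_one]
      push_cast
      ring
    have ha : p₁.coeff m = p₂.coeff m := by
      have hh := congrArg (fun r : k[X] => r.coeff m) h
      rw [hcoe p₁ h1m h1d, hcoe p₂ h2m h2d] at hh
      have hinv : -((((2 * (m + 1) + 1 : ℕ) : k))⁻¹) ≠ 0 :=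
        neg_ne_zero.2 (inv_ne_zero hc)
      have hh' : -((((2 * (m + 1) + 1 : ℕ) : k))⁻¹) * p₁.coeff m
          = -((((2 * (m + 1) + 1 : ℕ) : k))⁻¹) * p₂.coeff m := by
        linear_combination hh
      exact mul_left_cancel₀ hinv hh'
    set a := p₂.coeff m with haa
    rw [ha] at h
    have hCinv : (C ((((2 * (m + 1) + 1 : ℕ) : k))⁻¹) : k[X]) ≠ 0 := by
      simpa using inv_ne_zero hc
    have h' : p₁ + 2 * (X - C a) * derivative p₁ = p₂ + 2 * (X - C a) * derivative p₂ :=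
      mul_left_cancel₀ hCinv h
    have hz : (p₁ - p₂) + 2 * (X - C a) * derivative (p₁ - p₂) = 0 := by
      rw [derivative_sub]
      linear_combination h'
    exact sub_eq_zero.1 (L_inj' hz)
  · -- surjectivity
    rintro q ⟨hqm, hqd⟩
    obtain ⟨p, hpm, hpd, hpe⟩ := surj_aux hn hqm hqd
    exact ⟨p, ⟨hpm, hpd⟩, hpe⟩
end

section
/- Let R be a commutative ring, let e ≥ 1 and b ∈ R. Under the R-algebra map R[[t]] → R[[x]] sending t to x^e + b, the ring R[[x]] is isomorphic as R[[t]]-algebra to R[[t]][x]/(x^e + b − t) (a free module of rank e), and the norm of the element x with respect to this finite free extension equals (−1)^{e+1}(t − b) up to sign, i.e. N(x) = ±(t − b). -/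
open Polynomial

namespace WeierstrassAux

noncomputable section

variable {R : Type*} [CommRing R]

/-- `u = X^e + b` in `R[[x]]`. -/
def wu (e : ℕ) (b : R) : PowerSeries R := PowerSeries.X ^ e + PowerSeries.C b

lemma coeff_wu_pow (e : ℕ) (b : R) (he : 1 ≤ e) (k m : ℕ) :
    PowerSeries.coeff m (wu e b ^ k) =
      if e ∣ m then b ^ (k - m / e) * (k.choose (m / e) : R) else 0 := by
  have h0e : 0 < e := he
  rw [wu, add_pow, map_sum]
  have hterm : ∀ r, (PowerSeries.X (R := R) ^ e) ^ r * PowerSeries.C b ^ (k - r) *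
      ((k.choose r : ℕ) : PowerSeries R)
      = PowerSeries.C (b ^ (k - r) * ((k.choose r : ℕ) : R)) * PowerSeries.X ^ (e * r) := by
    intro r
    rw [← pow_mul, ← map_pow, ← map_natCast (PowerSeries.C (R := R)) (k.choose r), map_mul]
    ring
  have hco : ∀ r, PowerSeries.coeff m ((PowerSeries.X (R := R) ^ e) ^ r *
      PowerSeries.C b ^ (k - r) * ((k.choose r : ℕ) : PowerSeries R)) =
      if m = e * r then b ^ (k - r) * (k.choose r : R) else 0 := by
    intro r
    rw [hterm, PowerSeries.coeff_C_mul, PowerSeries.coeff_X_pow, mul_ite, mul_one, mul_zero]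
  simp only [hco]
  by_cases h : e ∣ m
  · obtain ⟨j, rfl⟩ := h
    have hdiv : e * j / e = j := Nat.mul_div_cancel_left j h0e
    rw [if_pos ⟨j, rfl⟩, hdiv]
    have hcond : ∀ r, (e * j = e * r) ↔ (j = r) := fun r =>
      ⟨fun h => Nat.eq_of_mul_eq_mul_left h0e h, fun h => by rw [h]⟩
    rw [Finset.sum_congr rfl fun r _ => by rw [if_congr (hcond r) rfl rfl]]
    rw [Finset.sum_ite_eq]
    by_cases hj : j ∈ Finset.range (k + 1)
    · rw [if_pos hj]
    · rw [if_neg hj]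
      have : k < j := by simpa using hj
      rw [Nat.choose_eq_zero_of_lt this]
      simp
  · rw [if_neg h]
    refine Finset.sum_eq_zero fun r _ => ?_
    rw [if_neg fun hc => h ⟨r, hc⟩]

lemma coeff_wu_pow_eq_zero {e N : ℕ} {b : R} (he : 1 ≤ e) (hbN : b ^ N = 0) {m n k : ℕ}
    (hm : m ≤ n) (hk : n + N ≤ k) : PowerSeries.coeff m (wu e b ^ k) = 0 := by
  rw [coeff_wu_pow e b he]
  split_ifs with h
  · have hj : m / e ≤ n := le_trans (Nat.div_le_self m e) hm
    have hb : b ^ (k - m / e) = b ^ N * b ^ (k - m / e - N) := by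
      rw [← pow_add]; congr 1; omega
    rw [hb, hbN, zero_mul, zero_mul]
  · rfl

/-- Evaluation of a polynomial at `u`. -/
def ev (e : ℕ) (b : R) (p : Polynomial R) : PowerSeries R :=
  Polynomial.eval₂ (PowerSeries.C (R := R)) (wu e b) p

lemma ev_add (e : ℕ) (b : R) (p q : Polynomial R) :
    ev e b (p + q) = ev e b p + ev e b q := Polynomial.eval₂_add _ _

lemma coeff_ev_eq_zero {e N : ℕ} {b : R} (he : 1 ≤ e) (hbN : b ^ N = 0) {p : Polynomial R}
    {n K : ℕ} (hK : n + N ≤ K) (hp : ∀ k < K, p.coeff k = 0) :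
    PowerSeries.coeff n (ev e b p) = 0 := by
  rw [ev, Polynomial.eval₂_eq_sum, Polynomial.sum, map_sum]
  refine Finset.sum_eq_zero fun k hk => ?_
  have hkK : K ≤ k := by
    by_contra hc
    exact Polynomial.mem_support_iff.mp hk (hp k (not_le.1 hc))
  rw [PowerSeries.coeff_C_mul,
    coeff_wu_pow_eq_zero he hbN (le_refl n) (le_trans hK hkK), mul_zero]

lemma coeff_ev_trunc {e : ℕ} {b : R} (he : 1 ≤ e) (F : PowerSeries R) {n K : ℕ} (hK : 1 ≤ K) :
    PowerSeries.coeff n (ev e b (PowerSeries.trunc K F)) =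
      ∑ k ∈ Finset.range K, PowerSeries.coeff k F * PowerSeries.coeff n (wu e b ^ k) := by
  have hd : (PowerSeries.trunc K F).natDegree < K := by
    have h := PowerSeries.degree_trunc_lt F K
    rcases eq_or_ne (PowerSeries.trunc K F) 0 with h0 | h0
    · rw [h0, Polynomial.natDegree_zero]; omega
    · exact (Polynomial.natDegree_lt_iff_degree_lt h0).2 h
  rw [ev, Polynomial.eval₂_eq_sum_range' _ hd, map_sum]
  refine Finset.sum_congr rfl fun k hk => ?_
  rw [PowerSeries.coeff_C_mul, PowerSeries.coeff_trunc, if_pos (Finset.mem_range.1 hk)]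

lemma coeff_ev_trunc_stable {e N : ℕ} {b : R} (he : 1 ≤ e) (hbN : b ^ N = 0)
    (F : PowerSeries R) {n K K' : ℕ} (hK : n + N ≤ K) (hK' : K ≤ K') :
    PowerSeries.coeff n (ev e b (PowerSeries.trunc K' F)) =
      PowerSeries.coeff n (ev e b (PowerSeries.trunc K F)) := by
  have hsub : PowerSeries.trunc K' F =
      PowerSeries.trunc K F + (PowerSeries.trunc K' F - PowerSeries.trunc K F) := by ring
  have hz : PowerSeries.coeff n
      (ev e b (PowerSeries.trunc K' F - PowerSeries.trunc K F)) = 0 := by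
    refine coeff_ev_eq_zero he hbN hK fun k hk => ?_
    rw [Polynomial.coeff_sub, PowerSeries.coeff_trunc, PowerSeries.coeff_trunc,
      if_pos (lt_of_lt_of_le hk hK'), if_pos hk, sub_self]
  rw [hsub, ev_add, map_add, hz, add_zero]

/-- The substitution homomorphism `R[[t]] → R[[x]]`, `t ↦ x^e + b`. -/
def wg (e N : ℕ) (b : R) (he : 1 ≤ e) (hN : 2 ≤ N) (hbN : b ^ N = 0) :
    PowerSeries R →+* PowerSeries R where
  toFun F := PowerSeries.mk fun n =>
    PowerSeries.coeff n (ev e b (PowerSeries.trunc (n + N) F))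
  map_one' := by
    ext n
    rw [PowerSeries.coeff_mk]
    have h : n + N = (n + N - 1) + 1 := by omega
    rw [h, PowerSeries.trunc_one, ev, Polynomial.eval₂_one]
  map_zero' := by
    ext n
    rw [PowerSeries.coeff_mk, map_zero (PowerSeries.trunc (R := R) (n + N)), ev, Polynomial.eval₂_zero, map_zero]
  map_add' F G := by
    ext n
    rw [PowerSeries.coeff_mk, map_add (PowerSeries.trunc (R := R) (n + N)), ev_add, map_add, map_add,
      PowerSeries.coeff_mk, PowerSeries.coeff_mk]
  map_mul' F G := by
    ext n
    rw [PowerSeries.coeff_mk, PowerSeries.coeff_mul]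
    have h1 : PowerSeries.coeff n (ev e b (PowerSeries.trunc (n + N) (F * G))) =
        PowerSeries.coeff n
          (ev e b (PowerSeries.trunc (n + N) F * PowerSeries.trunc (n + N) G)) := by
      have hsub : PowerSeries.trunc (n + N) F * PowerSeries.trunc (n + N) G =
          PowerSeries.trunc (n + N) (F * G) +
            (PowerSeries.trunc (n + N) F * PowerSeries.trunc (n + N) G -
              PowerSeries.trunc (n + N) (F * G)) := by ring
      have hz : PowerSeries.coeff n (ev e b
          (PowerSeries.trunc (n + N) F * PowerSeries.trunc (n + N) G -
            PowerSeries.trunc (n + N) (F * G))) = 0 := by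
        refine coeff_ev_eq_zero he hbN (le_refl (n + N)) fun k hk => ?_
        rw [Polynomial.coeff_sub, Polynomial.coeff_mul, PowerSeries.coeff_trunc,
          if_pos hk, PowerSeries.coeff_mul]
        rw [sub_eq_zero]
        refine Finset.sum_congr rfl fun x hx => ?_
        have hx' := Finset.HasAntidiagonal.mem_antidiagonal.1 hx
        rw [PowerSeries.coeff_trunc, PowerSeries.coeff_trunc,
          if_pos (by omega), if_pos (by omega)]
      rw [hsub, ev_add, map_add, hz, add_zero]
    have h2 : ev e b (PowerSeries.trunc (n + N) F * PowerSeries.trunc (n + N) G) =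
        ev e b (PowerSeries.trunc (n + N) F) * ev e b (PowerSeries.trunc (n + N) G) :=
      Polynomial.eval₂_mul _ _
    rw [h1, h2, PowerSeries.coeff_mul]
    refine Finset.sum_congr rfl fun x hx => ?_
    have hx' := Finset.HasAntidiagonal.mem_antidiagonal.1 hx
    rw [PowerSeries.coeff_mk, PowerSeries.coeff_mk,
      coeff_ev_trunc_stable he hbN F (le_refl (x.1 + N)) (by omega),
      coeff_ev_trunc_stable he hbN G (le_refl (x.2 + N)) (by omega)]

variable {e N : ℕ} {b : R} (he : 1 ≤ e) (hN : 2 ≤ N) (hbN : b ^ N = 0)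

lemma wg_coeff (F : PowerSeries R) (n : ℕ) :
    PowerSeries.coeff n (wg e N b he hN hbN F) =
      PowerSeries.coeff n (ev e b (PowerSeries.trunc (n + N) F)) := by
  rw [wg, RingHom.coe_mk, MonoidHom.coe_mk, OneHom.coe_mk, PowerSeries.coeff_mk]

lemma wg_X : wg e N b he hN hbN PowerSeries.X = wu e b := by
  ext n
  rw [wg_coeff]
  have h : n + N = (n + N - 2) + 2 := by omega
  rw [h, PowerSeries.trunc_X, ev, Polynomial.eval₂_X]

lemma wg_C (r : R) : wg e N b he hN hbN (PowerSeries.C r) = PowerSeries.C r := by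
  ext n
  rw [wg_coeff]
  have h : n + N = (n + N - 1) + 1 := by omega
  rw [h, PowerSeries.trunc_C, ev, Polynomial.eval₂_C]

/-- The operator on coefficient sequences induced by `wg` on each residue class. -/
def wT (N : ℕ) (b : R) : (ℕ → R) →ₗ[R] (ℕ → R) where
  toFun a := fun j => ∑ d ∈ Finset.range N, a (j + d) * (b ^ d * ((j + d).choose j : R))
  map_add' a c := by
    funext j
    simp [add_mul, Finset.sum_add_distrib]
  map_smul' r a := by
    funext j
    simp [Finset.mul_sum, mul_assoc]

lemma wT_apply (a : ℕ → R) (j : ℕ) :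
    wT N b a j = ∑ d ∈ Finset.range N, a (j + d) * (b ^ d * ((j + d).choose j : R)) := rfl

/-- The strictly triangular part of `wT`. -/
def wS (N : ℕ) (b : R) : (ℕ → R) →ₗ[R] (ℕ → R) where
  toFun a := fun j => ∑ d ∈ Finset.Ico 1 N, a (j + d) * (b ^ d * ((j + d).choose j : R))
  map_add' a c := by
    funext j
    simp [add_mul, Finset.sum_add_distrib]
  map_smul' r a := by
    funext j
    simp [Finset.mul_sum, mul_assoc]

lemma wT_eq (hN : 1 ≤ N) : wT N b = LinearMap.id + wS N b := by
  refine LinearMap.ext fun a => funext fun j => ?_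
  have h : Finset.range N = Finset.Ico 0 N := by rw [Finset.range_eq_Ico]
  rw [wT_apply, h, Finset.sum_eq_sum_Ico_succ_bot (by omega : 0 < N)]
  simp only [add_zero, pow_zero, one_mul, Nat.choose_self, Nat.cast_one, mul_one]
  rfl

lemma wS_apply (a : ℕ → R) (j : ℕ) :
    wS N b a j = ∑ d ∈ Finset.Ico 1 N, a (j + d) * (b ^ d * ((j + d).choose j : R)) := rfl

lemma wS_smul (a : ℕ → R) : ∃ c, wS N b a = b • c := by
  refine ⟨fun j => ∑ d ∈ Finset.Ico 1 N, a (j + d) * (b ^ (d - 1) * ((j + d).choose j : R)),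
    funext fun j => ?_⟩
  rw [wS_apply, Pi.smul_apply, smul_eq_mul, Finset.mul_sum]
  refine Finset.sum_congr rfl fun d hd => ?_
  have hd1 : 1 ≤ d := (Finset.mem_Ico.1 hd).1
  have hb : b ^ d = b * b ^ (d - 1) := by
    rw [← pow_succ']; congr 1; omega
  rw [hb]; ring

lemma wS_pow_smul (m : ℕ) (a : ℕ → R) : ∃ c, (wS N b ^ m) a = b ^ m • c := by
  induction m generalizing a with
  | zero => exact ⟨a, by simp⟩
  | succ m ih =>
    obtain ⟨c1, h1⟩ := wS_smul (N := N) (b := b) a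
    obtain ⟨c2, h2⟩ := ih c1
    refine ⟨c2, ?_⟩
    rw [pow_succ, Module.End.mul_apply, h1, map_smul, h2, smul_smul, ← pow_succ']

lemma wS_nilpotent (hbN : b ^ N = 0) : wS N b ^ N = 0 := by
  refine LinearMap.ext fun a => ?_
  obtain ⟨c, hc⟩ := wS_pow_smul (N := N) (b := b) N a
  rw [hc, hbN, zero_smul, LinearMap.zero_apply]

lemma wT_bijective (hN : 1 ≤ N) (hbN : b ^ N = 0) : Function.Bijective (wT N b) := by
  have h : IsUnit (wT N b : Module.End R (ℕ → R)) := by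
    rw [wT_eq hN]
    exact IsNilpotent.isUnit_one_add ⟨N, wS_nilpotent hbN⟩
  exact (Module.End.isUnit_iff _).mp h

/-- Coefficient formula for `wg` on residue classes. -/
lemma wg_coeff_mul_index (G : PowerSeries R) (j : ℕ) :
    PowerSeries.coeff (e * j) (wg e N b he hN hbN G) =
      wT N b (fun k => PowerSeries.coeff k G) j := by
  have h0e : 0 < e := he
  rw [wg_coeff, coeff_ev_trunc he G (by omega)]
  have hdc : ∀ k, PowerSeries.coeff (e * j) (wu e b ^ k) =
      b ^ (k - j) * (k.choose j : R) := by
    intro k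
    rw [coeff_wu_pow e b he, if_pos ⟨j, rfl⟩, Nat.mul_div_cancel_left j h0e]
  simp only [hdc]
  have hje : j ≤ e * j := Nat.le_mul_of_pos_left j h0e
  have hsub : Finset.Ico j (j + N) ⊆ Finset.range (e * j + N) := by
    intro x hx
    have := (Finset.mem_Ico.1 hx).2
    rw [Finset.mem_range]; omega
  rw [← Finset.sum_subset hsub (fun x hx hnx => ?_)]
  · rw [Finset.sum_Ico_eq_sum_range, wT_apply]
    simp only [Nat.add_sub_cancel_left]
  · rw [Finset.mem_Ico, not_and_or] at hnx
    rcases hnx with h | h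
    · rw [Nat.choose_eq_zero_of_lt (by omega), Nat.cast_zero, mul_zero, mul_zero]
    · have hb0 : b ^ (x - j) = b ^ N * b ^ (x - j - N) := by
        rw [← pow_add]; congr 1; omega
      rw [hb0, hbN, zero_mul, zero_mul, mul_zero]

lemma wg_coeff_not_dvd {G : PowerSeries R} {n : ℕ} (h : ¬ e ∣ n) :
    PowerSeries.coeff n (wg e N b he hN hbN G) = 0 := by
  rw [wg_coeff, coeff_ev_trunc he G (by omega)]
  refine Finset.sum_eq_zero fun k _ => ?_
  rw [coeff_wu_pow e b he, if_neg h, mul_zero]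

/-- The key coefficient formula for a combination `∑ g(G i) x^i`. -/
lemma coeff_comb (G : Fin e → PowerSeries R) (n : ℕ) :
    PowerSeries.coeff n (∑ i : Fin e, wg e N b he hN hbN (G i) * PowerSeries.X ^ (i : ℕ)) =
      wT N b (fun k => PowerSeries.coeff k (G ⟨n % e, Nat.mod_lt n he⟩)) (n / e) := by
  have h0e : 0 < e := he
  rw [map_sum]
  rw [Finset.sum_eq_single (⟨n % e, Nat.mod_lt n he⟩ : Fin e)]
  · rw [PowerSeries.coeff_mul_X_pow', if_pos (Nat.mod_le n e)]
    have hme : n - n % e = e * (n / e) := by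
      have h := Nat.div_add_mod n e; omega
    rw [hme, wg_coeff_mul_index]
  · intro i _ hne
    rw [PowerSeries.coeff_mul_X_pow']
    split_ifs with hin
    · refine wg_coeff_not_dvd he hN hbN fun hdvd => ?_
      obtain ⟨c, hc⟩ := hdvd
      apply hne
      refine Fin.ext ?_
      show (i : ℕ) = n % e
      have hn : n = (i : ℕ) + e * c := by omega
      rw [hn, Nat.add_mul_mod_self_left, Nat.mod_eq_of_lt i.isLt]
    · rfl
  · intro h
    exact absurd (Finset.mem_univ _) h

end

end WeierstrassAux

open WeierstrassAux

/-- Under `t ↦ x^e + b` (`b` nilpotent, `e ≥ 1`), `R[[x]]` is isomorphic to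
`R[[t]][x]/(x^e + b - t)`, a free `R[[t]]`-module of rank `e`, and the norm of
`x` for this extension is `±(t - b)`, namely `N(x) = (-1)^{e+1}(t - b)`. -/
theorem norm_in_weierstrass_extension (R : Type*) [CommRing R] [Nontrivial R]
    (e : ℕ) (he : 1 ≤ e) (b : R) (hb : IsNilpotent b)
    (f : Polynomial (PowerSeries R))
    (hf : f = X ^ e + C (PowerSeries.C b - PowerSeries.X)) :
    (∃ φ : AdjoinRoot f ≃+* PowerSeries R,
        φ (AdjoinRoot.root f) = PowerSeries.X ∧
        φ (AdjoinRoot.of f PowerSeries.X) = PowerSeries.X ^ e + PowerSeries.C b ∧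
        ∀ r : R, φ (AdjoinRoot.of f (PowerSeries.C r)) = PowerSeries.C r) ∧
      Module.finrank (PowerSeries R) (AdjoinRoot f) = e ∧
      Algebra.norm (PowerSeries R) (AdjoinRoot.root f) =
        (-1) ^ (e + 1) * (PowerSeries.X - PowerSeries.C b) := by
  obtain ⟨N₀, hN₀⟩ := hb
  set N : ℕ := N₀ + 2 with hNdef
  have hN : 2 ≤ N := by omega
  have hbN : b ^ N = 0 := by rw [hNdef, pow_add, hN₀, zero_mul]
  have h0e : 0 < e := he
  -- basic facts about f
  have hmonic : f.Monic := by
    rw [hf]; exact Polynomial.monic_X_pow_add_C _ (by omega)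
  have hdeg : f.natDegree = e := by
    rw [hf]; exact Polynomial.natDegree_X_pow_add_C
  -- the substitution homomorphism
  set g : PowerSeries R →+* PowerSeries R := wg e N b he hN hbN with hg
  have hroot : Polynomial.eval₂ g PowerSeries.X f = 0 := by
    rw [hf, Polynomial.eval₂_add, Polynomial.eval₂_pow, Polynomial.eval₂_X,
      Polynomial.eval₂_C, hg, map_sub, wg_C, wg_X, wu]
    ring
  set φ0 : AdjoinRoot f →+* PowerSeries R := AdjoinRoot.lift g PowerSeries.X hroot with hφ0
  have hφX : φ0 (AdjoinRoot.root f) = PowerSeries.X := AdjoinRoot.lift_root hroot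
  have hφof : ∀ s, φ0 (AdjoinRoot.of f s) = g s := fun s => AdjoinRoot.lift_of hroot
  have hsum : ∀ G : Fin e → PowerSeries R,
      φ0 (∑ i : Fin e, AdjoinRoot.of f (G i) * AdjoinRoot.root f ^ (i : ℕ)) =
        ∑ i : Fin e, g (G i) * PowerSeries.X ^ (i : ℕ) := by
    intro G
    rw [map_sum]
    refine Finset.sum_congr rfl fun i _ => ?_
    rw [map_mul, map_pow, hφof, hφX]
  -- every element is a combination of powers of the root
  have hrep : ∀ z : AdjoinRoot f, ∃ G : Fin e → PowerSeries R,
      z = ∑ i : Fin e, AdjoinRoot.of f (G i) * AdjoinRoot.root f ^ (i : ℕ) := by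
    intro z
    obtain ⟨p, rfl⟩ := AdjoinRoot.mk_surjective z
    set q := p %ₘ f with hqdef
    have hq : q.natDegree < e := by
      by_cases h0 : q = 0
      · rw [h0, Polynomial.natDegree_zero]; omega
      · have hlt := Polynomial.degree_modByMonic_lt p hmonic
        rw [Polynomial.degree_eq_natDegree hmonic.ne_zero, hdeg] at hlt
        exact (Polynomial.natDegree_lt_iff_degree_lt h0).2 hlt
    have hzq : AdjoinRoot.mk f p = AdjoinRoot.mk f q := by
      conv_lhs => rw [← Polynomial.modByMonic_add_div p f]
      rw [map_add, map_mul, AdjoinRoot.mk_self, zero_mul, add_zero]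
    refine ⟨fun i => q.coeff (i : ℕ), ?_⟩
    rw [hzq]
    conv_lhs => rw [q.as_sum_range' e hq]
    rw [map_sum, Fin.sum_univ_eq_sum_range
      (fun i => AdjoinRoot.of f (q.coeff i) * AdjoinRoot.root f ^ i)]
    refine Finset.sum_congr rfl fun i _ => ?_
    rw [← Polynomial.C_mul_X_pow_eq_monomial, map_mul, map_pow, AdjoinRoot.mk_X]
    rfl
  have hT := wT_bijective (b := b) (R := R) (by omega : 1 ≤ N) hbN
  -- injectivity
  have hinj : Function.Injective φ0 := by
    rw [injective_iff_map_eq_zero]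
    intro z hz
    obtain ⟨G, rfl⟩ := hrep z
    rw [hsum] at hz
    have hG : ∀ i : Fin e, G i = 0 := by
      intro i
      have key : ∀ j : ℕ, wT N b (fun k => PowerSeries.coeff k (G i)) j = 0 := by
        intro j
        have h1 := congrArg (PowerSeries.coeff (e * j + (i : ℕ))) hz
        rw [coeff_comb he hN hbN, map_zero] at h1
        have hmod : (⟨(e * j + (i : ℕ)) % e, Nat.mod_lt _ he⟩ : Fin e) = i := by
          refine Fin.ext ?_
          show (e * j + (i : ℕ)) % e = (i : ℕ)
          rw [Nat.mul_add_mod, Nat.mod_eq_of_lt i.isLt]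
        have hdiv : (e * j + (i : ℕ)) / e = j := by
          rw [Nat.mul_add_div h0e, Nat.div_eq_of_lt i.isLt, add_zero]
        rw [hmod, hdiv] at h1
        exact h1
      have h2 : wT N b (fun k => PowerSeries.coeff k (G i)) = wT N b 0 := by
        rw [map_zero]; exact funext key
      have h3 := hT.injective h2
      ext k
      have := congrFun h3 k
      simpa using this
    simp [hG]
  -- surjectivity
  have hsurj : Function.Surjective φ0 := by
    intro F
    have hex : ∀ i : Fin e, ∃ c : ℕ → R,
        wT N b c = fun j => PowerSeries.coeff (e * j + (i : ℕ)) F :=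
      fun i => hT.surjective _
    choose c hc using hex
    refine ⟨∑ i : Fin e, AdjoinRoot.of f (PowerSeries.mk (c i)) * AdjoinRoot.root f ^ (i : ℕ), ?_⟩
    rw [hsum]
    ext n
    rw [coeff_comb he hN hbN]
    have hck : (fun k => PowerSeries.coeff k
        (PowerSeries.mk (c (⟨n % e, Nat.mod_lt n he⟩ : Fin e)))) =
        c (⟨n % e, Nat.mod_lt n he⟩ : Fin e) :=
      funext fun k => PowerSeries.coeff_mk k _
    rw [hck, hc]
    show PowerSeries.coeff (e * (n / e) + n % e) F = PowerSeries.coeff n F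
    rw [Nat.div_add_mod]
  -- the ring isomorphism
  have hbij : Function.Bijective φ0 := ⟨hinj, hsurj⟩
  refine ⟨⟨RingEquiv.ofBijective φ0 hbij, ?_, ?_, ?_⟩, ?_, ?_⟩
  · rw [RingEquiv.ofBijective_apply]; exact hφX
  · rw [RingEquiv.ofBijective_apply, hφof, hg, wg_X, wu]
  · intro r
    rw [RingEquiv.ofBijective_apply, hφof, hg, wg_C]
  -- finrank
  · rw [(AdjoinRoot.powerBasis' hmonic).finrank, AdjoinRoot.powerBasis'_dim, hdeg]
  -- the norm
  · have hmp : minpoly (PowerSeries R) (AdjoinRoot.root f) = f := by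
      refine (minpoly.unique' (PowerSeries R) (AdjoinRoot.root f) hmonic ?_ ?_).symm
      · rw [AdjoinRoot.aeval_eq, AdjoinRoot.mk_self]
      · intro q hqd
        by_cases h0 : q = 0
        · exact Or.inl h0
        · refine Or.inr fun habs => ?_
          rw [AdjoinRoot.aeval_eq, AdjoinRoot.mk_eq_zero] at habs
          exact hmonic.not_dvd_of_degree_lt h0 hqd habs
    have hgen : AdjoinRoot.root f = (AdjoinRoot.powerBasis' hmonic).gen :=
      (AdjoinRoot.powerBasis'_gen hmonic).symm
    rw [hgen, Algebra.PowerBasis.norm_gen_eq_coeff_zero_minpoly,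
      AdjoinRoot.powerBasis'_gen, hmp, AdjoinRoot.powerBasis'_dim, hdeg, hf]
    rw [Polynomial.coeff_add, Polynomial.coeff_X_pow, Polynomial.coeff_C_zero,
      if_neg (by omega : ¬ 0 = e), zero_add, pow_succ]
    ring
end
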